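/- Let M ⊆ ℝ^n be a C^1 hypersurface (an (n−1)-dimensional submanifold) with reach(M) ≥ r > 0. Then for all p, q ∈ M, the distance from q − p to the tangent space T_p M satisfies d_{T_p M}(q − p) ≤ ‖q − p‖²/(2r); equivalently, |(q − p)·n(p)| ≤ ‖q − p‖²/(2r) for a unit normal n(p) at p. -/

import Mathlib

set_option maxHeartbeats 1000000

open Metric Filter Submodule
open scoped RealInnerProductSpace Topology

section Aux

variable {E : Type*} [NormedAddCommGroup E] [InnerProductSpace ℝ E] [FiniteDimensional ℝ E]
variable {M : Set E}

lemma eps_aux (c : ℝ) : Tendsto (fun k : ℕ => c / (k + 1)) atTop (𝓝 0) := by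
  have := tendsto_one_div_add_atTop_nhds_zero_nat (𝕜 := ℝ)
  have h := this.const_mul c
  simpa [div_eq_mul_inv, one_div, mul_comm] using h

lemma growth_step (hMcl : IsClosed M) (hMne : M.Nonempty)
    {z x : E} (hzx : dist z x = infDist z M) (hd0 : 0 < dist z x)
    (huniq : ∀ q ∈ M, dist z q ≤ dist z x → q = x)
    {lam : ℝ} (hlam0 : 0 < lam) (hlam : lam < 1) {ε₀ : ℝ} (hε₀ : 0 < ε₀) :
    ∃ ε, 0 < ε ∧ ε ≤ ε₀ ∧
      dist z x + lam * ε ≤ infDist (z + (ε / dist z x) • (z - x)) M := by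
  by_contra hcon
  push_neg at hcon
  set d : ℝ := dist z x with hd
  have hdnorm : ‖z - x‖ = d := (dist_eq_norm z x).symm
  -- the sequence of epsilons
  set ε : ℕ → ℝ := fun k => ε₀ / (k + 1) with hε
  have hεpos : ∀ k : ℕ, 0 < ε k := by intro k; positivity
  have hεle : ∀ k : ℕ, ε k ≤ ε₀ := by
    intro k
    rw [hε, div_le_iff₀ (by positivity)]
    nlinarith [Nat.cast_nonneg (α := ℝ) k, hε₀]
  have hq : ∀ k : ℕ, ∃ q ∈ M,
      dist (z + (ε k / d) • (z - x)) q < d + lam * ε k := by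
    intro k
    exact (infDist_lt_iff hMne).mp (hcon (ε k) (hεpos k) (hεle k))
  choose q hqM hqd using hq
  -- norm of the shift
  have he : ∀ k : ℕ, ‖(ε k / d) • (z - x)‖ = ε k := by
    intro k
    rw [norm_smul, Real.norm_eq_abs, abs_of_nonneg (by positivity), hdnorm]
    field_simp
  -- key inequality
  have hf2 : ∀ k : ℕ, d^2 * (1 - lam) < ⟪q k - x, z - x⟫ := by
    intro k
    have h1 : d ≤ dist z (q k) := hzx ▸ infDist_le_dist_of_mem (hqM k)
    have hdist : dist (z + (ε k / d) • (z - x)) (q k)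
        = ‖(z - q k) + (ε k / d) • (z - x)‖ := by
      rw [dist_eq_norm]; congr 1; abel
    have h3 : ⟪z - q k, z - x⟫ = d^2 - ⟪q k - x, z - x⟫ := by
      have hzz : z - q k = (z - x) - (q k - x) := by abel
      rw [hzz, inner_sub_left, real_inner_self_eq_norm_sq, hdnorm]
    have hexp : ‖(z - q k) + (ε k / d) • (z - x)‖^2
        = ‖z - q k‖^2 + 2 * (ε k / d) * (d^2 - ⟪q k - x, z - x⟫) + (ε k)^2 := by
      rw [norm_add_sq_real, real_inner_smul_right, h3, he k]
      ring
    have hsq : ‖(z - q k) + (ε k / d) • (z - x)‖^2 < (d + lam * ε k)^2 := by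
      rw [← hdist]
      have := hqd k
      have hnn : (0:ℝ) ≤ dist (z + (ε k / d) • (z - x)) (q k) := dist_nonneg
      nlinarith
    have hzq : d^2 ≤ ‖z - q k‖^2 := by
      rw [← dist_eq_norm]
      nlinarith [h1, hd0]
    set A : ℝ := ⟪q k - x, z - x⟫
    have e1 : 2 * (ε k / d) * (d^2 - A) < 2 * d * lam * ε k + (lam^2 - 1) * (ε k)^2 := by
      nlinarith [hexp, hsq, hzq]
    have e2 : (lam^2 - 1) * (ε k)^2 ≤ 0 := by
      have h21 : lam^2 - 1 ≤ 0 := by nlinarith [hlam, hlam0]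
      nlinarith [sq_nonneg (ε k)]
    have key : 2 * (ε k / d) * (d^2 - A) < 2 * d * lam * ε k := by linarith
    have h6 : (d^2 - A) / d < d * lam := by
      have h7 : 2 * ε k * ((d^2 - A)/d) < 2 * ε k * (d * lam) := by
        have hrw : 2 * ε k * ((d^2 - A)/d) = 2 * (ε k / d) * (d^2 - A) := by
          ring
        rw [hrw]
        calc 2 * (ε k / d) * (d^2 - A) < 2 * d * lam * ε k := key
          _ = 2 * ε k * (d * lam) := by ring
      exact lt_of_mul_lt_mul_left h7 (by positivity)
    have h8 : d^2 - A < d * lam * d := (div_lt_iff₀ hd0).mp h6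
    have h8' : d * lam * d = d^2 * lam := by ring
    linarith
  -- bounded, take a convergent subsequence
  have hqb : ∀ k : ℕ, q k ∈ closedBall z (d + 2*ε₀) := by
    intro k
    have h8 : dist z (q k) ≤ dist z (z + (ε k / d) • (z - x))
        + dist (z + (ε k / d) • (z - x)) (q k) := dist_triangle _ _ _
    have h9 : dist z (z + (ε k / d) • (z - x)) = ε k := by
      rw [dist_self_add_right, he k]
    rw [mem_closedBall, dist_comm]
    have := hqd k
    have := hεle k
    have := hεpos k
    nlinarith [hlam, hlam0]
  obtain ⟨qb, hqbmem, φ, hφmono, hφtend⟩ :=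
    (isCompact_closedBall z (d + 2*ε₀)).tendsto_subseq hqb
  have hqbM : qb ∈ M := hMcl.mem_of_tendsto hφtend
    (Filter.Eventually.of_forall fun k => hqM (φ k))
  have hqbd : dist z qb ≤ d := by
    have hlim : Tendsto (fun k => dist z (q (φ k))) atTop (𝓝 (dist z qb)) :=
      tendsto_const_nhds.dist hφtend
    have hglim : Tendsto (fun k : ℕ => d + (1 + lam) * (ε₀ / (k+1))) atTop (𝓝 d) := by
      have := (eps_aux ε₀).const_mul (1 + lam)
      have h2 := tendsto_const_nhds (x := d) (f := atTop (α := ℕ)) |>.add this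
      simpa using h2
    refine le_of_tendsto_of_tendsto hlim hglim ?_
    refine Filter.Eventually.of_forall fun k => ?_
    have h8 : dist z (q (φ k)) ≤ ε (φ k) + dist (z + (ε (φ k) / d) • (z - x)) (q (φ k)) := by
      have := dist_triangle z (z + (ε (φ k) / d) • (z - x)) (q (φ k))
      rwa [dist_self_add_right, he (φ k)] at this
    have h9 : ε (φ k) ≤ ε₀ / (k+1) := by
      have hcast : (k:ℝ)+1 ≤ (φ k:ℝ)+1 := by
        exact_mod_cast Nat.succ_le_succ hφmono.le_apply
      exact div_le_div_of_nonneg_left hε₀.le (by positivity) hcast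
    have := hqd (φ k)
    nlinarith [hεpos (φ k)]
  have hqbx : qb = x := huniq qb hqbM hqbd
  have hA : d^2 * (1 - lam) ≤ ⟪qb - x, z - x⟫ := by
    have hlim : Tendsto (fun k => ⟪q (φ k) - x, z - x⟫) atTop (𝓝 ⟪qb - x, z - x⟫) :=
      (hφtend.sub tendsto_const_nhds).inner tendsto_const_nhds
    exact ge_of_tendsto' hlim fun k => (hf2 (φ k)).le
  rw [hqbx, sub_self] at hA
  simp only [inner_zero_left] at hA
  have := mul_pos (pow_pos hd0 2) (sub_pos.mpr hlam)
  linarith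


lemma shift_dist {z x : E} (hd0 : 0 < dist z x) {ε : ℝ} (hε : 0 ≤ ε) :
    dist (z + (ε / dist z x) • (z - x)) z = ε := by
  rw [dist_comm, dist_self_add_right, norm_smul, Real.norm_eq_abs,
    abs_of_nonneg (by positivity), ← dist_eq_norm]
  field_simp

lemma max_step (hMcl : IsClosed M) (hMne : M.Nonempty) {r : ℝ}
    (hreach : ∀ y : E, infDist y M < r → ∃! x, x ∈ M ∧ dist y x = infDist y M)
    {y₀ : E} {d' lam : ℝ} (hd₀ : 0 < infDist y₀ M) (hd' : infDist y₀ M < d') (hd'r : d' < r)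
    (hlam : 1/2 ≤ lam) (hlam1 : lam < 1) :
    ∃ z, dist z y₀ ≤ (d' - infDist y₀ M)/lam ∧ infDist z M = d' := by
  have hlam0 : (0:ℝ) < lam := lt_of_lt_of_le (by norm_num) hlam
  set d₀ : ℝ := infDist y₀ M with hd₀def
  set R : ℝ := (d' - d₀)/lam with hRdef
  have hR0 : 0 < R := div_pos (by linarith) hlam0
  set K : Set E := closedBall y₀ R ∩ {w : E | infDist w M ≤ d'} with hKdef
  have hKc : IsCompact K := (isCompact_closedBall _ _).inter_right
    (isClosed_le (continuous_infDist_pt M) continuous_const)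
  have hy₀K : y₀ ∈ K := ⟨mem_closedBall_self hR0.le, by
    simp only [Set.mem_setOf_eq]; linarith⟩
  have hfc : Continuous fun w : E => infDist w M - lam * dist w y₀ :=
    (continuous_infDist_pt M).sub (continuous_const.mul (continuous_id.dist continuous_const))
  obtain ⟨z, hzK, hzmax⟩ := hKc.exists_isMaxOn ⟨y₀, hy₀K⟩ hfc.continuousOn
  have hφz : d₀ ≤ infDist z M - lam * dist z y₀ := by simpa using hzmax hy₀K
  have hzy₀ : (0:ℝ) ≤ lam * dist z y₀ := mul_nonneg hlam0.le dist_nonneg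
  by_cases hcase : infDist z M = d'
  · refine ⟨z, ?_, hcase⟩
    exact mem_closedBall.mp hzK.1
  · exfalso
    have hzd' : infDist z M ≤ d' := hzK.2
    have hzlt : infDist z M < d' := lt_of_le_of_ne hzd' hcase
    have hz0 : 0 < infDist z M := by linarith
    have hzr : infDist z M < r := hzlt.trans hd'r
    obtain ⟨xz, ⟨hxzM, hxzd⟩, hxzu⟩ := hreach z hzr
    have hxzd' : dist z xz = infDist z M := hxzd
    have hzx0 : 0 < dist z xz := by rw [hxzd']; exact hz0
    have huniq : ∀ q ∈ M, dist z q ≤ dist z xz → q = xz := by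
      intro q hq hle
      have h1 : infDist z M ≤ dist z q := infDist_le_dist_of_mem hq
      exact hxzu q ⟨hq, le_antisymm (hle.trans_eq hxzd') h1⟩
    have hRgap : dist z y₀ < R := by
      rw [hRdef, lt_div_iff₀ hlam0]
      nlinarith
    set ε₀ : ℝ := min (R - dist z y₀) (d' - infDist z M) with hε₀def
    have hε₀ : 0 < ε₀ := lt_min (by linarith) (by linarith)
    set lam' : ℝ := (1 + lam)/2 with hlam'def
    have hlam'0 : 0 < lam' := by rw [hlam'def]; linarith
    have hlam'1 : lam' < 1 := by rw [hlam'def]; linarith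
    obtain ⟨ε, hε0, hεle, hεgrow⟩ := growth_step hMcl hMne hxzd' hzx0 huniq hlam'0 hlam'1 hε₀
    set z' : E := z + (ε / dist z xz) • (z - xz) with hz'def
    have hzz' : dist z' z = ε := shift_dist hzx0 hε0.le
    have hup : infDist z' M ≤ infDist z M + ε := by
      have := infDist_le_infDist_add_dist (x := z') (y := z) (s := M)
      rwa [hzz'] at this
    have hεR : ε ≤ R - dist z y₀ := hεle.trans (min_le_left _ _)
    have hεd : ε ≤ d' - infDist z M := hεle.trans (min_le_right _ _)
    have hz'K : z' ∈ K := by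
      constructor
      · rw [mem_closedBall]
        have := dist_triangle z' z y₀
        rw [hzz'] at this
        linarith
      · simp only [Set.mem_setOf_eq]
        linarith
    have hmax := hzmax hz'K
    simp only [Set.mem_setOf_eq] at hmax
    have hdist' : dist z' y₀ ≤ dist z y₀ + ε := by
      have := dist_triangle z' z y₀
      linarith [hzz']
    have hlow : infDist z M + lam' * ε ≤ infDist z' M := by
      have := hεgrow
      rwa [hxzd'] at this
    have hmul : lam * dist z' y₀ ≤ lam * (dist z y₀ + ε) :=
      mul_le_mul_of_nonneg_left hdist' hlam0.le
    have hgap : 0 < (lam' - lam) * ε := by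
      have : 0 < lam' - lam := by rw [hlam'def]; linarith
      positivity
    nlinarith [hmax]


lemma realized_ineq (hMcl : IsClosed M) (hMne : M.Nonempty) {r : ℝ} (hr : 0 < r)
    (hreach : ∀ y : E, infDist y M < r → ∃! x, x ∈ M ∧ dist y x = infDist y M)
    {y₀ x : E} (hx : x ∈ M) (hd : dist y₀ x = infDist y₀ M)
    (hd0 : 0 < infDist y₀ M) (hdr : infDist y₀ M < r) :
    ∀ q ∈ M, ⟪y₀ - x, q - x⟫ ≤ infDist y₀ M * ‖q - x‖^2 / (2*r) := by
  intro q hq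
  set d₀ : ℝ := infDist y₀ M with hd₀def
  set b : E := y₀ - x with hbdef
  have hb : ‖b‖ = d₀ := by rw [hbdef, ← dist_eq_norm, hd]
  set w : E := q - x with hwdef
  -- main estimate for every intermediate radius d'
  have H : ∀ d', d' ∈ Set.Ioo d₀ r → ⟪b, w⟫ ≤ d₀ * ‖w‖^2 / (2*d') := by
    rintro d' ⟨hd'l, hd'r⟩
    -- sequence of maximizers
    have hexz : ∀ k : ℕ, ∃ z, dist z y₀ ≤ (d' - d₀) * (1 + 1/((k:ℝ)+1)) ∧ infDist z M = d' := by
      intro k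
      have hlamk : (1:ℝ)/2 ≤ ((k:ℝ)+1)/((k:ℝ)+2) := by
        rw [div_le_div_iff₀ (by norm_num) (by positivity)]
        push_cast; linarith [Nat.cast_nonneg (α := ℝ) k]
      have hlamk1 : ((k:ℝ)+1)/((k:ℝ)+2) < 1 := by
        rw [div_lt_one (by positivity)]; linarith
      obtain ⟨z, hz1, hz2⟩ := max_step hMcl hMne hreach hd0 hd'l hd'r hlamk hlamk1
      refine ⟨z, ?_, hz2⟩
      have hrw : (d' - d₀) / (((k:ℝ)+1)/((k:ℝ)+2)) = (d' - d₀) * (1 + 1/((k:ℝ)+1)) := by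
        rw [div_div_eq_mul_div, mul_div_assoc]
        congr 1
        field_simp
        ring
      rw [hrw] at hz1
      exact hz1
    choose z hz1 hz2 using hexz
    -- convergent subsequence
    have hzb : ∀ k : ℕ, z k ∈ closedBall y₀ (2*(d' - d₀)) := by
      intro k
      rw [mem_closedBall]
      have h1 : (1:ℝ) + 1/((k:ℝ)+1) ≤ 2 := by
        have : 1/((k:ℝ)+1) ≤ 1 := by
          rw [div_le_one (by positivity)]; linarith [Nat.cast_nonneg (α := ℝ) k]
        linarith
      have := hz1 k
      nlinarith [this, h1, sub_pos.mpr hd'l]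
    obtain ⟨zs, hzsmem, φ, hφmono, hφtend⟩ :=
      (isCompact_closedBall y₀ (2*(d' - d₀))).tendsto_subseq hzb
    have hzs2 : infDist zs M = d' := by
      have h1 : Tendsto (fun k => infDist (z (φ k)) M) atTop (𝓝 (infDist zs M)) :=
        ((continuous_infDist_pt M).tendsto zs).comp hφtend
      have h2 : Tendsto (fun _ : ℕ => d') atTop (𝓝 d') := tendsto_const_nhds
      have h3 : (fun k => infDist (z (φ k)) M) = fun _ : ℕ => d' := by
        funext k; exact hz2 (φ k)
      rw [h3] at h1
      exact tendsto_nhds_unique h1 h2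
    have hzs1 : dist zs y₀ ≤ d' - d₀ := by
      have hlim : Tendsto (fun k => dist (z (φ k)) y₀) atTop (𝓝 (dist zs y₀)) :=
        hφtend.dist tendsto_const_nhds
      have hglim : Tendsto (fun k : ℕ => (d' - d₀) * (1 + 1/((k:ℝ)+1))) atTop
          (𝓝 (d' - d₀)) := by
        have h4 : Tendsto (fun k : ℕ => 1 + 1/((k:ℝ)+1)) atTop (𝓝 1) := by
          have := tendsto_one_div_add_atTop_nhds_zero_nat (𝕜 := ℝ)
          have h5 := tendsto_const_nhds (x := (1:ℝ)) (f := atTop (α := ℕ)) |>.add this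
          simpa using h5
        have := h4.const_mul (d' - d₀)
        simpa [mul_comm] using this
      refine le_of_tendsto_of_tendsto hlim hglim ?_
      refine Filter.Eventually.of_forall fun k => ?_
      refine (hz1 (φ k)).trans ?_
      have h6 : 1/((φ k:ℝ)+1) ≤ 1/((k:ℝ)+1) := by
        apply div_le_div_of_nonneg_left (by norm_num) (by positivity)
        exact_mod_cast Nat.succ_le_succ hφmono.le_apply
      nlinarith [sub_pos.mpr hd'l]
    -- rigidity: zs = x + (d'/d₀) • b
    set a : E := zs - y₀ with hadef
    have hax : zs - x = a + b := by rw [hadef, hbdef]; abel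
    have hna : ‖a‖ ≤ d' - d₀ := by rw [hadef, ← dist_eq_norm]; exact hzs1
    have hge : d' ≤ ‖a + b‖ := by
      rw [← hax, ← dist_eq_norm, ← hzs2]
      exact infDist_le_dist_of_mem hx
    have hle : ‖a + b‖ ≤ d' := by
      calc ‖a + b‖ ≤ ‖a‖ + ‖b‖ := norm_add_le a b
        _ ≤ (d' - d₀) + d₀ := by rw [hb]; linarith
        _ = d' := by ring
    have hnab : ‖a + b‖ = d' := le_antisymm hle hge
    have hna' : ‖a‖ = d' - d₀ := by
      have : ‖a + b‖ ≤ ‖a‖ + ‖b‖ := norm_add_le a b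
      rw [hnab, hb] at this
      linarith
    have hinner : ⟪a, b⟫ = ‖a‖ * ‖b‖ := by
      have := norm_add_sq_real a b
      rw [hnab, hna', hb] at this
      nlinarith
    have hcs : ‖b‖ • a = ‖a‖ • b := inner_eq_norm_mul_iff_real.mp hinner
    rw [hb, hna'] at hcs
    -- cs : d₀ • a = (d' - d₀) • b
    have hinnerw : ∀ v : E, d₀ * ⟪a, v⟫ = (d' - d₀) * ⟪b, v⟫ := by
      intro v
      have h7 : ⟪d₀ • a, v⟫ = ⟪(d' - d₀) • b, v⟫ := by rw [hcs]
      rwa [real_inner_smul_left, real_inner_smul_left] at h7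
    -- distance inequality to q
    have hdq : d' ≤ ‖(a + b) - w‖ := by
      have h8 : zs - q = (a + b) - w := by rw [← hax, hwdef]; abel
      rw [← h8, ← dist_eq_norm, ← hzs2]
      exact infDist_le_dist_of_mem hq
    have hexp : ‖(a + b) - w‖^2 = ‖a + b‖^2 - 2*(⟪a, w⟫ + ⟪b, w⟫) + ‖w‖^2 := by
      rw [norm_sub_sq_real, inner_add_left]
    have h9 : d₀ * ⟪a, w⟫ = (d' - d₀) * ⟪b, w⟫ := hinnerw w
    have h10 : d'^2 ≤ ‖(a+b) - w‖^2 := by nlinarith [hdq, hr, hd0, hd'l]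
    rw [hexp, hnab] at h10
    -- d'² ≤ d'² − 2(⟪a,w⟫+⟪b,w⟫) + ‖w‖², and ⟪a,w⟫ = ((d'−d₀)/d₀)⟪b,w⟫
    have h11 : d₀ * (⟪a, w⟫ + ⟪b, w⟫) = d' * ⟪b, w⟫ := by
      rw [mul_add, h9]; ring
    have h12 : 2 * (d' * ⟪b, w⟫) ≤ d₀ * ‖w‖^2 := by
      have h13 : 2*(⟪a, w⟫ + ⟪b, w⟫) ≤ ‖w‖^2 := by linarith
      have h14 := mul_le_mul_of_nonneg_left h13 hd0.le
      nlinarith [h11]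
    rw [le_div_iff₀ (by linarith : (0:ℝ) < 2*d')]
    nlinarith [h12]
  -- pass to the limit d' → r
  haveI : (𝓝[<] r).NeBot := nhdsWithin_Iio_self_neBot' ⟨d₀, hdr⟩
  have htd : Tendsto (fun t : ℝ => d₀ * ‖w‖^2 / (2*t)) (𝓝[<] r) (𝓝 (d₀ * ‖w‖^2 / (2*r))) := by
    have hc : ContinuousAt (fun t : ℝ => d₀ * ‖w‖^2 / (2*t)) r := by
      apply ContinuousAt.div continuousAt_const (continuousAt_const.mul continuousAt_id)
      exact mul_ne_zero two_ne_zero hr.ne'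
    exact hc.tendsto.mono_left nhdsWithin_le_nhds
  refine ge_of_tendsto htd ?_
  filter_upwards [Ioo_mem_nhdsLT_of_mem (show r ∈ Set.Ioc d₀ r from ⟨hdr, le_rfl⟩)] with
    d' hd' using H d' hd'


/-- Directions of points of `M` near `p` are almost orthogonal to `ν`. -/
lemma angle_small {p : E} {W : Submodule ℝ E} (hW : tangentConeAt ℝ M p = (W : Set E))
    {ν : E} (hνW : ν ∈ Wᗮ) :
    ∀ c : ℝ, 0 < c → ∃ δ : ℝ, 0 < δ ∧ ∀ q ∈ M, dist q p < δ → |⟪q - p, ν⟫| ≤ c * ‖q - p‖ := by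
  intro c hc
  by_contra hcon
  push_neg at hcon
  have hq : ∀ k : ℕ, ∃ q ∈ M, dist q p < 1/((k:ℝ)+1) ∧ c * ‖q - p‖ < |⟪q - p, ν⟫| := by
    intro k
    obtain ⟨q, hq1, hq2, hq3⟩ := hcon (1/((k:ℝ)+1)) (by positivity)
    exact ⟨q, hq1, hq2, hq3⟩
  choose q hqM hqd hqip using hq
  have hqne : ∀ k, q k ≠ p := by
    intro k hkp
    have := hqip k
    rw [hkp, sub_self, inner_zero_left] at this
    simp at this
  have hqnorm : ∀ k, 0 < ‖q k - p‖ := fun k => by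
    rw [norm_pos_iff, sub_ne_zero]; exact hqne k
  set dir : ℕ → E := fun k => ‖q k - p‖⁻¹ • (q k - p) with hdir
  have hdirs : ∀ k, dir k ∈ sphere (0:E) 1 := by
    intro k
    rw [mem_sphere, dist_zero_right, hdir, norm_smul, Real.norm_eq_abs,
      abs_of_nonneg (by positivity)]
    exact inv_mul_cancel₀ (hqnorm k).ne'
  obtain ⟨w, hwmem, φ, hφmono, hφtend⟩ := (isCompact_sphere (0:E) 1).tendsto_subseq hdirs
  -- w belongs to the tangent cone
  have hqp : Tendsto (fun k => ‖q (φ k) - p‖) atTop (𝓝 0) := by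
    apply squeeze_zero (fun k => (hqnorm (φ k)).le) (g := fun k : ℕ => 1/((k:ℝ)+1))
    · intro k
      have h1 : ‖q (φ k) - p‖ = dist (q (φ k)) p := (dist_eq_norm _ _).symm
      have h2 : (1:ℝ)/((φ k:ℝ)+1) ≤ 1/((k:ℝ)+1) := by
        apply div_le_div_of_nonneg_left (by norm_num) (by positivity)
        exact_mod_cast Nat.succ_le_succ hφmono.le_apply
      linarith [hqd (φ k)]
    · simpa using eps_aux (1:ℝ)
  have hwcone : w ∈ tangentConeAt ℝ M p := by
    refine mem_tangentConeAt_iff_exists_seq_norm_tendsto_atTop.mpr ⟨fun k => ‖q (φ k) - p‖⁻¹, fun k => q (φ k) - p, ?_, ?_, ?_⟩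
    swap
    · refine Filter.Eventually.of_forall fun k => ?_
      simpa using hqM (φ k)
    · have h3 : Tendsto (fun k => ‖q (φ k) - p‖) atTop (𝓝[>] 0) := by
        apply tendsto_nhdsWithin_of_tendsto_nhds_of_eventually_within _ hqp
        exact Filter.Eventually.of_forall fun k => hqnorm (φ k)
      have h4 := h3.inv_tendsto_nhdsGT_zero
      refine Tendsto.congr (fun k => ?_) h4
      simp [Real.norm_eq_abs, abs_of_nonneg (inv_nonneg.mpr (hqnorm (φ k)).le)]
    · exact hφtend
  rw [hW] at hwcone
  have hw0 : ⟪w, ν⟫ = 0 := Submodule.inner_right_of_mem_orthogonal hwcone hνW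
  -- but the inner products stay bounded below
  have hlim : Tendsto (fun k => |⟪dir (φ k), ν⟫|) atTop (𝓝 |⟪w, ν⟫|) :=
    (hφtend.inner tendsto_const_nhds).abs
  have hcle : c ≤ |⟪w, ν⟫| := by
    refine ge_of_tendsto hlim ?_
    refine Filter.Eventually.of_forall fun k => ?_
    have h5 : c * ‖q (φ k) - p‖ < |⟪q (φ k) - p, ν⟫| := hqip (φ k)
    have h6 : |⟪dir (φ k), ν⟫| = ‖q (φ k) - p‖⁻¹ * |⟪q (φ k) - p, ν⟫| := by
      rw [hdir, real_inner_smul_left, abs_mul, abs_of_nonneg (by positivity : (0:ℝ) ≤ ‖q (φ k) - p‖⁻¹)]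
    have h8 : c ≤ |⟪q (φ k) - p, ν⟫| / ‖q (φ k) - p‖ := by
      rw [le_div_iff₀ (hqnorm (φ k))]
      linarith [h5]
    rw [h6, inv_mul_eq_div]
    exact h8
  rw [hw0] at hcle
  simp at hcle
  linarith


lemma transfer (hMcl : IsClosed M) (hMne : M.Nonempty) {r : ℝ} (hr : 0 < r)
    (hreach : ∀ y : E, infDist y M < r → ∃! x, x ∈ M ∧ dist y x = infDist y M)
    {p : E} (hp : p ∈ M) {W : Submodule ℝ E} (hW : tangentConeAt ℝ M p = (W : Set E))
    {ν : E} (hν1 : ‖ν‖ = 1) (hνW : ν ∈ Wᗮ) :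
    ∀ q ∈ M, ⟪ν, q - p⟫ ≤ ‖q - p‖^2/(2*r) := by
  -- seed times: arbitrarily small t with p + t • ν ∉ M
  have hseed : ∀ ε : ℝ, 0 < ε → ∃ t : ℝ, 0 < t ∧ t < ε ∧ p + t • ν ∉ M := by
    intro ε hε
    by_contra hcon
    push_neg at hcon
    have hmem : ν ∈ tangentConeAt ℝ M p := by
      refine mem_tangentConeAt_iff_exists_seq_norm_tendsto_atTop.mpr ⟨fun k => ((k:ℝ)+1)/(ε/2), fun k => (ε/2/((k:ℝ)+1)) • ν, ?_, ?_, ?_⟩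
      swap
      · refine Filter.Eventually.of_forall fun k => ?_
        refine hcon (ε/2/((k:ℝ)+1)) (by positivity) ?_
        have h1 : ε/2/((k:ℝ)+1) ≤ ε/2 := by
          apply div_le_self (by positivity)
          linarith [Nat.cast_nonneg (α := ℝ) k]
        linarith
      · have h2 : Tendsto (fun k : ℕ => ((k:ℝ)+1)/(ε/2)) atTop atTop := by
          apply Tendsto.atTop_div_const (by positivity)
          exact tendsto_atTop_add_const_right _ 1 tendsto_natCast_atTop_atTop
        refine Tendsto.congr (fun k => ?_) h2
        rw [Real.norm_eq_abs, abs_of_nonneg (by positivity)]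
      · have h3 : ∀ k : ℕ, (((k:ℝ)+1)/(ε/2)) • ((ε/2/((k:ℝ)+1)) • ν) = ν := by
          intro k
          rw [smul_smul]
          have : ((k:ℝ)+1)/(ε/2) * (ε/2/((k:ℝ)+1)) = 1 := by
            field_simp
          rw [this, one_smul]
        simp only [h3]
        exact tendsto_const_nhds
    rw [hW] at hmem
    have h4 : ⟪ν, ν⟫ = 0 := Submodule.inner_right_of_mem_orthogonal hmem hνW
    rw [real_inner_self_eq_norm_sq, hν1] at h4
    norm_num at h4
  have hseq : ∀ k : ℕ, ∃ t : ℝ, 0 < t ∧ t < r/((k:ℝ)+1) ∧ p + t • ν ∉ M :=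
    fun k => hseed _ (by positivity)
  choose t ht0 htlt htnm using hseq
  have htr : ∀ k, t k < r := by
    intro k
    have h5 : r/((k:ℝ)+1) ≤ r := by
      apply div_le_self hr.le
      linarith [Nat.cast_nonneg (α := ℝ) k]
    linarith [htlt k]
  set z : ℕ → E := fun k => p + t k • ν with hzdef
  have hdzp : ∀ k, dist (z k) p = t k := by
    intro k
    rw [hzdef, dist_comm, dist_self_add_right, norm_smul, Real.norm_eq_abs,
      abs_of_nonneg (ht0 k).le, hν1, mul_one]
  have hdk_pos : ∀ k, 0 < infDist (z k) M := by
    intro k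
    exact (hMcl.notMem_iff_infDist_pos hMne).mp (htnm k)
  have hdk_le : ∀ k, infDist (z k) M ≤ t k := by
    intro k
    rw [← hdzp k]
    exact infDist_le_dist_of_mem hp
  have hdk_r : ∀ k, infDist (z k) M < r := fun k => lt_of_le_of_lt (hdk_le k) (htr k)
  have hex : ∀ k, ∃ x, x ∈ M ∧ dist (z k) x = infDist (z k) M :=
    fun k => (hreach (z k) (hdk_r k)).exists
  choose x hxM hxd using hex
  have hxz : ∀ k, dist (x k) p ≤ 2 * t k := by
    intro k
    have h6 : dist (x k) p ≤ dist (x k) (z k) + dist (z k) p := dist_triangle _ _ _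
    rw [dist_comm (x k) (z k), hxd k, hdzp k] at h6
    linarith [hdk_le k]
  set u : ℕ → E := fun k => (infDist (z k) M)⁻¹ • (z k - x k) with hudef
  -- the inequality for each k
  have hineq : ∀ k, ∀ q ∈ M, ⟪u k, q - x k⟫ ≤ ‖q - x k‖^2/(2*r) := by
    intro k q hq
    have h1 := realized_ineq hMcl hMne hr hreach (hxM k) (hxd k) (hdk_pos k) (hdk_r k) q hq
    have h2 : ⟪u k, q - x k⟫ = (infDist (z k) M)⁻¹ * ⟪z k - x k, q - x k⟫ := by
      rw [hudef, real_inner_smul_left]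
    rw [h2]
    have h3 := mul_le_mul_of_nonneg_left h1 (inv_nonneg.mpr (hdk_pos k).le)
    refine h3.trans_eq ?_
    have hne : infDist (z k) M ≠ 0 := (hdk_pos k).ne'
    field_simp
  -- x k → p
  have hxp : Tendsto x atTop (𝓝 p) := by
    rw [tendsto_iff_dist_tendsto_zero]
    apply squeeze_zero (fun k => dist_nonneg) (g := fun k : ℕ => 2*(r/((k:ℝ)+1)))
    · intro k
      have := hxz k
      have := (htlt k).le
      nlinarith
    · simpa [mul_div_assoc] using (eps_aux r).const_mul 2
  -- u k → ν
  have hu : Tendsto u atTop (𝓝 ν) := by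
    rw [Metric.tendsto_atTop]
    intro ε hε
    set c : ℝ := min (ε/7) (1/8) with hcdef
    have hc0 : 0 < c := lt_min (by positivity) (by norm_num)
    have hc8 : c ≤ 1/8 := min_le_right _ _
    have hcε : c ≤ ε/7 := min_le_left _ _
    obtain ⟨δ, hδ0, hδ⟩ := angle_small hW hνW c hc0
    have hev : ∀ᶠ k : ℕ in atTop, 2*(r/((k:ℝ)+1)) < δ := by
      apply Tendsto.eventually_lt_const hδ0
      simpa [mul_div_assoc] using (eps_aux r).const_mul 2
    rw [eventually_atTop] at hev
    obtain ⟨N, hN⟩ := hev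
    refine ⟨N, fun k hk => ?_⟩
    have h2t : 2 * t k < δ := by
      have := hN k hk
      have := (htlt k).le
      nlinarith
    set dk : ℝ := infDist (z k) M with hdkdef
    set ρ : ℝ := ‖x k - p‖ with hρdef
    have hρdist : dist (x k) p = ρ := dist_eq_norm _ _
    have hρ2t : ρ ≤ 2 * t k := by rw [← hρdist]; exact hxz k
    have hxδ : dist (x k) p < δ := by rw [hρdist]; linarith
    have hs : |⟪x k - p, ν⟫| ≤ c * ρ := hδ (x k) (hxM k) hxδ
    have hzx : z k - x k = t k • ν - (x k - p) := by
      show p + t k • ν - x k = _; rw [sub_sub_eq_add_sub, add_comm (t k • ν) p]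
    have hdknorm : ‖z k - x k‖ = dk := by rw [← dist_eq_norm, hxd k]
    have hd2 : dk^2 = (t k)^2 - 2 * t k * ⟪x k - p, ν⟫ + ρ^2 := by
      rw [← hdknorm, hzx, norm_sub_sq_real, norm_smul, Real.norm_eq_abs,
        abs_of_nonneg (ht0 k).le, hν1, mul_one, real_inner_smul_left, real_inner_comm]
      ring
    have hdk_le' : dk ≤ t k := hdk_le k
    have hρle : ρ ≤ 2*c*(t k) := by
      have h7 : ρ^2 ≤ 2 * t k * (c * ρ) := by
        have h8 : ⟪x k - p, ν⟫ ≤ c * ρ := le_trans (le_abs_self _) hs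
        nlinarith [hd2, hdk_le', hdk_pos k, ht0 k]
      nlinarith [mul_pos hc0 (ht0 k), norm_nonneg (x k - p)]
    have hd3 : t k - ρ ≤ dk := by
      have h9 : dist (z k) p ≤ dist (z k) (x k) + dist (x k) p := dist_triangle _ _ _
      rw [hdzp k, hxd k, hρdist] at h9
      linarith
    have hdklow : 3/4 * t k ≤ dk := by nlinarith [ht0 k]
    have hdkpos : 0 < dk := hdk_pos k
    have hsub : u k - ν = dk⁻¹ • ((z k - x k) - dk • ν) := by
      rw [hudef, smul_sub, smul_smul, inv_mul_cancel₀ hdkpos.ne', one_smul]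
    have hnormsub : ‖(z k - x k) - dk • ν‖ ≤ (t k - dk) + ρ := by
      have h10 : (z k - x k) - dk • ν = (t k - dk) • ν - (x k - p) := by
        rw [hzx, sub_smul]; abel
      rw [h10]
      refine (norm_sub_le _ _).trans ?_
      rw [norm_smul, Real.norm_eq_abs, hν1, mul_one, abs_of_nonneg (by linarith)]
    have hfinal : ‖u k - ν‖ ≤ 2 * ρ / dk := by
      rw [hsub, norm_smul, Real.norm_eq_abs, abs_of_nonneg (inv_nonneg.mpr hdkpos.le)]
      rw [div_eq_inv_mul]
      have h11 : t k - dk ≤ ρ := by linarith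
      have h12 : ‖(z k - x k) - dk • ν‖ ≤ 2 * ρ := by linarith [hnormsub]
      exact mul_le_mul_of_nonneg_left h12 (inv_nonneg.mpr hdkpos.le)
    rw [dist_eq_norm]
    have h13 : 2 * ρ / dk ≤ 2 * (2*c*(t k)) / (3/4 * t k) := by
      apply div_le_div₀ (by nlinarith [mul_pos hc0 (ht0 k)]) (by linarith)
        (by nlinarith [ht0 k]) hdklow
    have h14 : 2 * (2*c*(t k)) / (3/4 * t k) = 16/3 * c := by
      have htne : t k ≠ 0 := (ht0 k).ne'
      field_simp
      ring
    have h15 : 16/3 * c < ε := by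
      have : (16:ℝ)/3 * c ≤ 16/3 * (ε/7) := by nlinarith
      nlinarith
    calc ‖u k - ν‖ ≤ 2 * ρ / dk := hfinal
      _ ≤ 16/3 * c := by rw [← h14]; exact h13
      _ < ε := h15
  -- pass to the limit
  intro q hq
  have hL : Tendsto (fun k => ⟪u k, q - x k⟫) atTop (𝓝 ⟪ν, q - p⟫) :=
    hu.inner (tendsto_const_nhds.sub hxp)
  have hR : Tendsto (fun k => ‖q - x k‖^2/(2*r)) atTop (𝓝 (‖q - p‖^2/(2*r))) := by
    have h16 := (Tendsto.sub (tendsto_const_nhds (x := q)) hxp).norm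
    exact (h16.pow 2).div_const (2*r)
  exact le_of_tendsto_of_tendsto hL hR (Filter.Eventually.of_forall fun k => hineq k q hq)


end Aux

theorem stmt18 (n : ℕ) (r : ℝ) (hr : 0 < r) (M : Set (EuclideanSpace ℝ (Fin n)))
    (hMcl : IsClosed M) (hMne : M.Nonempty)
    (hsub : ∀ p ∈ M, ∃ W : Submodule ℝ (EuclideanSpace ℝ (Fin n)),
      Module.finrank ℝ W = n - 1 ∧
      tangentConeAt ℝ M p = (W : Set (EuclideanSpace ℝ (Fin n))))
    (hreach : ∀ y : EuclideanSpace ℝ (Fin n), infDist y M < r →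
      ∃! x, x ∈ M ∧ dist y x = infDist y M) :
    ∀ p ∈ M, ∀ q ∈ M,
      infDist (q - p) (tangentConeAt ℝ M p) ≤ ‖q - p‖ ^ 2 / (2 * r) := by
  intro p hp q hq
  obtain ⟨W, hWrank, hWtan⟩ := hsub p hp
  rw [hWtan]
  rcases eq_or_ne q p with hqp | hqp
  · rw [hqp, sub_self, infDist_zero_of_mem W.zero_mem]
    positivity
  · have hn : n ≠ 0 := by
      rintro rfl
      have h0 : Module.finrank ℝ (EuclideanSpace ℝ (Fin 0)) = 0 := by
        simp [finrank_euclideanSpace_fin]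
      have : Subsingleton (EuclideanSpace ℝ (Fin 0)) := Module.finrank_zero_iff.mp h0
      exact hqp (Subsingleton.elim q p)
    have hfr : Module.finrank ℝ (EuclideanSpace ℝ (Fin n)) = n := finrank_euclideanSpace_fin
    have horth : Module.finrank ℝ Wᗮ = 1 := by
      have h1 := W.finrank_add_finrank_orthogonal
      rw [hWrank, hfr] at h1
      omega
    have hbot : Wᗮ ≠ ⊥ := by
      intro hbot
      rw [hbot] at horth
      simp [finrank_bot] at horth
    obtain ⟨ν₀, hν₀W, hν₀ne⟩ := Submodule.exists_mem_ne_zero_of_ne_bot hbot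
    have hν₀pos : 0 < ‖ν₀‖ := norm_pos_iff.mpr hν₀ne
    set ν : EuclideanSpace ℝ (Fin n) := ‖ν₀‖⁻¹ • ν₀ with hνdef
    have hν1 : ‖ν‖ = 1 := by
      rw [hνdef, norm_smul, Real.norm_eq_abs, abs_of_nonneg (by positivity)]
      field_simp
    have hνW : ν ∈ Wᗮ := Submodule.smul_mem _ _ hν₀W
    have hνne : ν ≠ 0 := by
      intro h
      rw [h, norm_zero] at hν1
      norm_num at hν1
    have hspan : (ℝ ∙ ν) = Wᗮ := by
      apply Submodule.eq_of_le_of_finrank_eq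
      · rw [Submodule.span_singleton_le_iff_mem]; exact hνW
      · rw [finrank_span_singleton hνne, horth]
    have hb1 := transfer hMcl hMne hr hreach hp hWtan hν1 hνW q hq
    have hb2 := transfer hMcl hMne hr hreach hp hWtan (ν := -ν)
      (by rw [norm_neg]; exact hν1) (Submodule.neg_mem _ hνW) q hq
    rw [inner_neg_left] at hb2
    set v : EuclideanSpace ℝ (Fin n) := q - p with hvdef
    set cc : ℝ := ⟪ν, v⟫ with hccdef
    have hwmem : v - cc • ν ∈ W := by
      rw [← W.orthogonal_orthogonal]
      rw [Submodule.mem_orthogonal]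
      intro y hy
      rw [← hspan] at hy
      obtain ⟨a, ha⟩ := Submodule.mem_span_singleton.mp hy
      rw [← ha, real_inner_smul_left, inner_sub_right, real_inner_smul_right,
        real_inner_self_eq_norm_sq, hν1]
      rw [← hccdef]
      ring
    have hdistle : infDist v (W : Set (EuclideanSpace ℝ (Fin n))) ≤ |cc| := by
      have h2 : dist v (v - cc • ν) = |cc| := by
        rw [dist_eq_norm]
        have : v - (v - cc • ν) = cc • ν := by abel
        rw [this, norm_smul, Real.norm_eq_abs, hν1, mul_one]
      calc infDist v (W : Set (EuclideanSpace ℝ (Fin n))) ≤ dist v (v - cc • ν) :=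
            infDist_le_dist_of_mem hwmem
        _ = |cc| := h2
    have habs : |cc| ≤ ‖v‖^2/(2*r) := abs_le.mpr ⟨by linarith, hb1⟩
    exact hdistle.trans habs
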